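/- For 0 ≤ γ < 1 define C_γ = Σ_{j=2}^∞ γ^{j−2}/j. Let (F_n)_{n≥0} be a filtration and for each n ≥ 1 let Y_n be an F_n-measurable random variable, and let γ_n and λ_n be F_{n−1}-measurable random variables with 0 ≤ γ_n < 1 and 0 < λ_n ≤ 1/C_{γ_n} a.s. Set μ_n = E[ Y_n·1(−γ_n ≤ Y_n < λ_n) | F_{n−1} ]. Then the process exp( Σ_{i=1}^n ( Y_i − μ_i − λ_i^{−1}Y_i² ) ), n ≥ 1, is a supermartingale with expectation ≤ 1. -/

import Mathlib

open MeasureTheory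
open scoped NNReal

lemma sumC {g : ℝ} (hg0 : 0 ≤ g) (hg1 : g < 1) :
    Summable (fun j : ℕ => g ^ j / ((j : ℝ) + 2)) := by
  refine Summable.of_nonneg_of_le (fun j => by positivity) (fun j => ?_)
    (summable_geometric_of_lt_one hg0 hg1)
  exact div_le_self (by positivity) (by exact_mod_cast le_add_of_nonneg_left (by positivity))

lemma C_half {g : ℝ} (hg0 : 0 ≤ g) (hg1 : g < 1) :
    1 / 2 ≤ ∑' j : ℕ, g ^ j / ((j : ℝ) + 2) := by
  have := Summable.le_tsum (sumC hg0 hg1) 0 (fun j _ => by positivity)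
  simpa using this

lemma log_quad {y : ℝ} (hy : 0 ≤ y) : y - y ^ 2 / 2 ≤ Real.log (1 + y) := by
  set F : ℝ → ℝ := fun t => Real.log (1 + t) - (t - t ^ 2 / 2) with hF
  have hder : ∀ t : ℝ, -1 < t → HasDerivAt F ((1 + t)⁻¹ - (1 - t)) t := by
    intro t ht
    have h1 : HasDerivAt (fun t : ℝ => 1 + t) 1 t := (hasDerivAt_id t).const_add 1
    have h2 : HasDerivAt (fun t : ℝ => Real.log (1 + t)) (1 / (1 + t)) t := by
      simpa using h1.log (by linarith)
    have h3 : HasDerivAt (fun t : ℝ => t - t ^ 2 / 2) (1 - t) t := by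
      have := ((hasDerivAt_pow 2 t).div_const 2)
      have h4 := (hasDerivAt_id t).sub this
      exact (by simpa using h4 : HasDerivAt (id - fun x : ℝ => x ^ 2 / 2) (1 - t) t)
    exact (by simpa [one_div] using h2.sub h3 : HasDerivAt ((fun t : ℝ => Real.log (1 + t)) - fun t : ℝ => t - t ^ 2 / 2) ((1 + t)⁻¹ - (1 - t)) t)
  have hmono : MonotoneOn F (Set.Ici (0 : ℝ)) := by
    refine monotoneOn_of_deriv_nonneg (convex_Ici 0) ?_ ?_ ?_
    · intro t ht
      exact (hder t (by simp at ht; linarith)).continuousAt.continuousWithinAt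
    · intro t ht
      rw [interior_Ici] at ht
      exact (hder t (by simp at ht; linarith)).differentiableAt.differentiableWithinAt
    · intro t ht
      rw [interior_Ici] at ht
      simp only [Set.mem_Ioi] at ht
      rw [(hder t (by linarith)).deriv]
      have h5 : (0:ℝ) < 1 + t := by linarith
      rw [sub_nonneg, ← sub_nonneg]
      have : (1 + t)⁻¹ * (1 + t) = 1 := inv_mul_cancel₀ (by linarith)
      nlinarith [sq_nonneg t]
  have h0 : F 0 = 0 := by simp [hF]
  have := hmono (Set.self_mem_Ici) (Set.mem_Ici.2 hy) hy
  rw [h0] at this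
  simp only [hF] at this
  linarith

lemma log_neg_side {g x : ℝ} (hx0 : 0 ≤ x) (hxg : x ≤ g) (hg1 : g < 1) :
    -x - (∑' j : ℕ, g ^ j / ((j : ℝ) + 2)) * x ^ 2 ≤ Real.log (1 - x) := by
  have hx1 : |x| < 1 := by rw [abs_of_nonneg hx0]; linarith
  have hsum := Real.hasSum_pow_div_log_of_abs_lt_one hx1
  have hg0 : 0 ≤ g := le_trans hx0 hxg
  -- -log(1-x) = ∑' n, x^(n+1)/(n+1)
  have heq : -Real.log (1 - x) = ∑' n : ℕ, x ^ (n + 1) / ((n : ℝ) + 1) := hsum.tsum_eq.symm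
  have hsummable := hsum.summable
  have hshift : ∑' n : ℕ, x ^ (n + 1) / ((n : ℝ) + 1)
      = x + ∑' n : ℕ, x ^ (n + 2) / ((n : ℝ) + 2) := by
    rw [Summable.tsum_eq_zero_add hsummable]
    norm_num
    apply tsum_congr; intro b
    norm_num [pow_succ]
    ring_nf
  have hterm : ∀ n : ℕ, x ^ (n + 2) / ((n : ℝ) + 2) ≤ x ^ 2 * (g ^ n / ((n : ℝ) + 2)) := by
    intro n
    rw [mul_div_assoc']
    gcongr
    calc x ^ (n + 2) = x ^ 2 * x ^ n := by ring
      _ ≤ x ^ 2 * g ^ n := by gcongr <;> assumption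
  have hRsum : Summable (fun n : ℕ => x ^ 2 * (g ^ n / ((n : ℝ) + 2))) :=
    (sumC hg0 hg1).mul_left _
  have hLsum : Summable (fun n : ℕ => x ^ (n + 2) / ((n : ℝ) + 2)) :=
    Summable.of_nonneg_of_le (fun n => by positivity) hterm hRsum
  have hS : ∑' n : ℕ, x ^ (n + 2) / ((n : ℝ) + 2)
      ≤ (∑' j : ℕ, g ^ j / ((j : ℝ) + 2)) * x ^ 2 := by
    calc ∑' n : ℕ, x ^ (n + 2) / ((n : ℝ) + 2)
        ≤ ∑' n : ℕ, x ^ 2 * (g ^ n / ((n : ℝ) + 2)) := Summable.tsum_le_tsum hterm hLsum hRsum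
      _ = x ^ 2 * ∑' j : ℕ, g ^ j / ((j : ℝ) + 2) := tsum_mul_left
      _ = _ := by ring
  rw [hshift] at heq
  linarith

lemma key_ineq {g l y : ℝ} (hg0 : 0 ≤ g) (hg1 : g < 1) (hl0 : 0 < l)
    (hl : l ≤ (∑' j : ℕ, g ^ j / ((j : ℝ) + 2))⁻¹) :
    Real.exp (y - l⁻¹ * y ^ 2) ≤ 1 + (if -g ≤ y ∧ y < l then y else 0) := by
  set C : ℝ := ∑' j : ℕ, g ^ j / ((j : ℝ) + 2) with hC
  have hC2 : 1 / 2 ≤ C := C_half hg0 hg1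
  have hC0 : 0 < C := by linarith
  have hlinv : C ≤ l⁻¹ := by
    rw [← inv_inv C]
    exact inv_anti₀ hl0 hl
  by_cases hcond : -g ≤ y ∧ y < l
  · rw [if_pos hcond]
    obtain ⟨hy1, hy2⟩ := hcond
    have hy1' : -1 < y := by linarith
    have h1y : (0:ℝ) < 1 + y := by linarith
    rw [← Real.exp_log h1y, Real.exp_le_exp]
    rcases le_or_gt 0 y with hy0 | hy0
    · have h1 : y - l⁻¹ * y ^ 2 ≤ y - y ^ 2 / 2 := by nlinarith [sq_nonneg y]
      have h2 := log_quad hy0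
      linarith
    · -- y < 0, set x = -y
      have hx := log_neg_side (x := -y) (g := g) (by linarith) (by linarith) hg1
      have hxx : (1:ℝ) - -y = 1 + y := by ring
      rw [hxx] at hx
      have : y - l⁻¹ * y ^ 2 ≤ y - C * y ^ 2 := by nlinarith [sq_nonneg y]
      have h2 : -(-y) - C * (-y) ^ 2 = y - C * y ^ 2 := by ring
      rw [h2] at hx
      linarith
  · rw [if_neg hcond, add_zero]
    rw [Real.exp_le_one_iff, sub_nonpos]
    push_neg at hcond
    rcases le_or_gt (-g) y with h1 | h1
    · have h2 := hcond h1
      have : y ≤ l⁻¹ * y ^ 2 := by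
        have hinv : l⁻¹ * l = 1 := inv_mul_cancel₀ (ne_of_gt hl0)
        nlinarith [sq_nonneg (y - l)]
      simpa using this
    · have hy0 : y < 0 := by linarith
      have : (0:ℝ) ≤ l⁻¹ * y ^ 2 := by positivity
      simpa using le_trans (le_of_lt hy0) this

/-- Corollary 5.3. -/
theorem stmt_16 {Ω : Type*} {mΩ : MeasurableSpace Ω} {μ : Measure Ω}
    [IsProbabilityMeasure μ] (ℱ : Filtration ℕ mΩ)
    (Y γ lam : ℕ → Ω → ℝ)
    (hY : ∀ n, StronglyMeasurable[ℱ (n + 1)] (Y (n + 1)))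
    (hγmeas : ∀ n, StronglyMeasurable[ℱ n] (γ (n + 1)))
    (hlammeas : ∀ n, StronglyMeasurable[ℱ n] (lam (n + 1)))
    (hγ : ∀ n, ∀ᵐ ω ∂μ, 0 ≤ γ (n + 1) ω ∧ γ (n + 1) ω < 1)
    (hlam : ∀ n, ∀ᵐ ω ∂μ, 0 < lam (n + 1) ω ∧
      lam (n + 1) ω ≤ (∑' j : ℕ, (γ (n + 1) ω) ^ j / ((j : ℝ) + 2))⁻¹)
    (μ' : ℕ → Ω → ℝ)
    (hμ'meas : ∀ n, StronglyMeasurable[ℱ n] (μ' (n + 1)))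
    (hμ' : ∀ n, μ' (n + 1) =ᵐ[μ]
      μ[fun ω => if -γ (n + 1) ω ≤ Y (n + 1) ω ∧ Y (n + 1) ω < lam (n + 1) ω
          then Y (n + 1) ω else 0 | ℱ n]) :
    Supermartingale
      (fun n ω => Real.exp (∑ i ∈ Finset.range n,
        (Y (i + 1) ω - μ' (i + 1) ω - (lam (i + 1) ω)⁻¹ * (Y (i + 1) ω) ^ 2))) ℱ μ ∧
    ∀ n, ∫ ω, Real.exp (∑ i ∈ Finset.range n,
        (Y (i + 1) ω - μ' (i + 1) ω - (lam (i + 1) ω)⁻¹ * (Y (i + 1) ω) ^ 2)) ∂μ ≤ 1 := by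
  have hle : ∀ n, ℱ n ≤ mΩ := fun n => ℱ.le n
  set X : ℕ → Ω → ℝ := fun n ω => Real.exp (∑ i ∈ Finset.range n,
      (Y (i + 1) ω - μ' (i + 1) ω - (lam (i + 1) ω)⁻¹ * (Y (i + 1) ω) ^ 2)) with hX
  set ind : ℕ → Ω → ℝ := fun n ω =>
      if -γ (n + 1) ω ≤ Y (n + 1) ω ∧ Y (n + 1) ω < lam (n + 1) ω
      then Y (n + 1) ω else 0 with hind
  -- adaptedness
  have hadp : ∀ n, StronglyMeasurable[ℱ n] (X n) := by
    intro n
    apply Real.continuous_exp.comp_stronglyMeasurable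
    apply Finset.stronglyMeasurable_fun_sum
    intro i hi
    have hi' : i + 1 ≤ n := Finset.mem_range.1 hi
    have hi'' : i ≤ n := le_trans (Nat.le_succ i) hi'
    have h1 : StronglyMeasurable[ℱ n] (Y (i + 1)) := (hY i).mono (ℱ.mono hi')
    have h2 : StronglyMeasurable[ℱ n] (μ' (i + 1)) := (hμ'meas i).mono (ℱ.mono hi'')
    have h3 : StronglyMeasurable[ℱ n] (lam (i + 1)) := (hlammeas i).mono (ℱ.mono hi'')
    exact (h1.sub h2).sub ((h3.measurable.inv.stronglyMeasurable).mul (h1.pow 2))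
  -- measurability of ind
  have hindm : ∀ n, AEStronglyMeasurable (ind n) μ := by
    intro n
    have hYM : Measurable (Y (n + 1)) := ((hY n).mono (hle (n + 1))).measurable
    have hγM : Measurable (γ (n + 1)) := ((hγmeas n).mono (hle n)).measurable
    have hlM : Measurable (lam (n + 1)) := ((hlammeas n).mono (hle n)).measurable
    have hset : MeasurableSet {ω | -γ (n + 1) ω ≤ Y (n + 1) ω ∧ Y (n + 1) ω < lam (n + 1) ω} :=
      (measurableSet_le hγM.neg hYM).inter (measurableSet_lt hYM hlM)
    exact ((Measurable.ite hset hYM measurable_const)).aestronglyMeasurable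
  -- lam ≤ 2 a.e.
  have hlam2 : ∀ n, ∀ᵐ ω ∂μ, 0 < lam (n + 1) ω ∧ lam (n + 1) ω ≤ 2 := by
    intro n
    filter_upwards [hγ n, hlam n] with ω hg hl
    refine ⟨hl.1, le_trans hl.2 ?_⟩
    have hC2 := C_half hg.1 hg.2
    calc (∑' j : ℕ, (γ (n + 1) ω) ^ j / ((j : ℝ) + 2))⁻¹ ≤ (1 / 2 : ℝ)⁻¹ :=
          inv_anti₀ (by norm_num) hC2
      _ = 2 := by norm_num
  -- ind bounded by 2 a.e.
  have hindb : ∀ n, ∀ᵐ ω ∂μ, |ind n ω| ≤ 2 := by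
    intro n
    filter_upwards [hγ n, hlam2 n] with ω hg hl
    by_cases h : -γ (n + 1) ω ≤ Y (n + 1) ω ∧ Y (n + 1) ω < lam (n + 1) ω
    · simp only [hind, if_pos h]
      rw [abs_le]
      constructor
      · linarith [h.1, hg.2]
      · linarith [h.2, hl.2]
    · simp [hind, if_neg h]
  have hindint : ∀ n, Integrable (ind n) μ := by
    intro n
    refine (integrable_const (2 : ℝ)).mono' (hindm n) ?_
    filter_upwards [hindb n] with ω h
    simpa [Real.norm_eq_abs] using h
  -- μ' bounded by 2 a.e.
  have hμ'b : ∀ n, ∀ᵐ ω ∂μ, |μ' (n + 1) ω| ≤ 2 := by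
    intro n
    have hb : ∀ᵐ ω ∂μ, |ind n ω| ≤ ((2 : ℝ≥0) : ℝ) := by
      filter_upwards [hindb n] with ω h using by simpa using h
    have := ae_bdd_condExp_of_ae_bdd (m := ℱ n) hb
    simp only [hind] at this
    filter_upwards [hμ' n, this] with ω h1 h2
    rw [h1]
    simpa using h2
  -- exponent term bound
  have hterm3 : ∀ i, ∀ᵐ ω ∂μ,
      Y (i + 1) ω - μ' (i + 1) ω - (lam (i + 1) ω)⁻¹ * (Y (i + 1) ω) ^ 2 ≤ 3 := by
    intro i
    filter_upwards [hlam2 i, hμ'b i] with ω hl hm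
    have hl0 := hl.1
    have h1 : Y (i + 1) ω - (lam (i + 1) ω)⁻¹ * (Y (i + 1) ω) ^ 2 ≤ lam (i + 1) ω / 4 := by
      nlinarith [mul_nonneg (inv_nonneg.2 hl0.le) (sq_nonneg (Y (i + 1) ω - lam (i + 1) ω / 2)),
        inv_mul_cancel₀ (ne_of_gt hl0)]
    have h2 : -μ' (i + 1) ω ≤ 2 := by
      have := abs_le.1 hm; linarith [this.1]
    linarith [hl.2]
  -- X bounded a.e.
  have hXb : ∀ n, ∀ᵐ ω ∂μ, X n ω ≤ Real.exp (3 * n) := by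
    intro n
    have hall : ∀ᵐ ω ∂μ, ∀ i,
        Y (i + 1) ω - μ' (i + 1) ω - (lam (i + 1) ω)⁻¹ * (Y (i + 1) ω) ^ 2 ≤ 3 :=
      ae_all_iff.2 hterm3
    filter_upwards [hall] with ω h
    simp only [hX]
    rw [Real.exp_le_exp]
    calc (∑ i ∈ Finset.range n,
          (Y (i + 1) ω - μ' (i + 1) ω - (lam (i + 1) ω)⁻¹ * (Y (i + 1) ω) ^ 2))
        ≤ ∑ i ∈ Finset.range n, (3 : ℝ) := Finset.sum_le_sum (fun i _ => h i)
      _ = 3 * n := by simp [mul_comm]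
  have hXint : ∀ n, Integrable (X n) μ := by
    intro n
    refine (integrable_const (Real.exp (3 * n))).mono'
      ((hadp n).mono (hle n)).aestronglyMeasurable ?_
    filter_upwards [hXb n] with ω h
    rw [Real.norm_eq_abs, abs_of_pos (Real.exp_pos _)]
    exact h
  -- W and its properties
  set W : ℕ → Ω → ℝ := fun n ω =>
      Real.exp (Y (n + 1) ω - (lam (n + 1) ω)⁻¹ * (Y (n + 1) ω) ^ 2) with hW
  have hWkey : ∀ n, ∀ᵐ ω ∂μ, W n ω ≤ 1 + ind n ω := by
    intro n
    filter_upwards [hγ n, hlam n] with ω hg hl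
    exact key_ineq hg.1 hg.2 hl.1 hl.2
  have hWint : ∀ n, Integrable (W n) μ := by
    intro n
    have hWm : AEStronglyMeasurable (W n) μ := by
      apply (Real.continuous_exp.comp_stronglyMeasurable ?_).aestronglyMeasurable
      have h1 : StronglyMeasurable (Y (n + 1)) := (hY n).mono (hle (n + 1))
      have h3 : StronglyMeasurable (lam (n + 1)) := (hlammeas n).mono (hle n)
      exact h1.sub ((h3.measurable.inv.stronglyMeasurable).mul (h1.pow 2))
    refine (integrable_const (3 : ℝ)).mono' hWm ?_
    filter_upwards [hWkey n, hindb n] with ω h1 h2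
    rw [Real.norm_eq_abs, abs_of_pos (Real.exp_pos _)]
    have := abs_le.1 h2
    calc W n ω ≤ 1 + ind n ω := h1
      _ ≤ 3 := by linarith [this.2]
  -- one-step supermartingale property
  have hstep : ∀ n, μ[X (n + 1)|ℱ n] ≤ᵐ[μ] X n := by
    intro n
    set f : Ω → ℝ := fun ω => X n ω * Real.exp (-(μ' (n + 1) ω)) with hf
    have hfSM : StronglyMeasurable[ℱ n] f :=
      (hadp n).mul (Real.continuous_exp.comp_stronglyMeasurable (hμ'meas n).neg)
    have hfpos : ∀ ω, 0 ≤ f ω := fun ω =>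
      mul_nonneg (Real.exp_pos _).le (Real.exp_pos _).le
    have hfb : ∀ᵐ ω ∂μ, ‖f ω‖ ≤ Real.exp (3 * n) * Real.exp 2 := by
      filter_upwards [hXb n, hμ'b n] with ω h1 h2
      rw [hf, Real.norm_eq_abs, abs_of_nonneg (hfpos ω)]
      have h3 : Real.exp (-(μ' (n + 1) ω)) ≤ Real.exp 2 := by
        rw [Real.exp_le_exp]; linarith [(abs_le.1 h2).1]
      exact mul_le_mul h1 h3 (Real.exp_pos _).le (Real.exp_pos _).le
    have hsplit : X (n + 1) = f * W n := by
      funext ω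
      simp only [hX, hW, hf, Pi.mul_apply, Finset.sum_range_succ, ← Real.exp_add]
      congr 1
      ring
    have h1 : μ[X (n + 1)|ℱ n] =ᵐ[μ] f * μ[W n|ℱ n] := by
      rw [hsplit]
      exact condExp_stronglyMeasurable_mul_of_bound (hle n) hfSM (hWint n) _ hfb
    have e2 : μ[W n|ℱ n] ≤ᵐ[μ] μ[fun ω => 1 + ind n ω|ℱ n] :=
      condExp_mono (hWint n) ((integrable_const (1 : ℝ)).add (hindint n)) (hWkey n)
    have e3 : μ[fun ω => 1 + ind n ω|ℱ n]
        =ᵐ[μ] fun ω => 1 + (μ[ind n|ℱ n]) ω := by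
      have := condExp_add (μ := μ) (m := ℱ n) (integrable_const (1 : ℝ)) (hindint n)
      refine this.trans ?_
      rw [condExp_const (hle n)]
      filter_upwards with ω
      simp
    have e4 : μ[W n|ℱ n] ≤ᵐ[μ] fun ω => 1 + μ' (n + 1) ω := by
      have e3' : μ[ind n|ℱ n] =ᵐ[μ] μ' (n + 1) := by
        have : ind n = fun ω => if -γ (n + 1) ω ≤ Y (n + 1) ω ∧ Y (n + 1) ω < lam (n + 1) ω
            then Y (n + 1) ω else 0 := by simp only [hind]
        rw [this]
        exact (hμ' n).symm
      filter_upwards [e2, e3, e3'] with ω h2 h3 h4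
      calc (μ[W n|ℱ n]) ω ≤ (μ[fun ω => 1 + ind n ω|ℱ n]) ω := h2
        _ = 1 + (μ[ind n|ℱ n]) ω := h3
        _ = 1 + μ' (n + 1) ω := by rw [h4]
    filter_upwards [h1, e4] with ω hh1 hh4
    rw [hh1]
    have hstep1 : f ω * (μ[W n|ℱ n]) ω ≤ f ω * (1 + μ' (n + 1) ω) :=
      mul_le_mul_of_nonneg_left hh4 (hfpos ω)
    have hstep2 : f ω * (1 + μ' (n + 1) ω) ≤ X n ω := by
      rw [hf]
      have hkey : Real.exp (-(μ' (n + 1) ω)) * (1 + μ' (n + 1) ω) ≤ 1 := by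
        rw [Real.exp_neg]
        rw [inv_mul_le_iff₀ (Real.exp_pos _), mul_one]
        linarith [Real.add_one_le_exp (μ' (n + 1) ω)]
      calc X n ω * Real.exp (-(μ' (n + 1) ω)) * (1 + μ' (n + 1) ω)
          = X n ω * (Real.exp (-(μ' (n + 1) ω)) * (1 + μ' (n + 1) ω)) := by ring
        _ ≤ X n ω * 1 := mul_le_mul_of_nonneg_left hkey (Real.exp_pos _).le
        _ = X n ω := mul_one _
    exact le_trans hstep1 hstep2
  have hsm : Supermartingale X ℱ μ := supermartingale_nat hadp hXint hstep
  refine ⟨hsm, fun n => ?_⟩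
  calc ∫ ω, X n ω ∂μ = ∫ ω, (μ[X n|ℱ 0]) ω ∂μ := (integral_condExp (hle 0)).symm
    _ ≤ ∫ ω, X 0 ω ∂μ :=
        integral_mono_ae integrable_condExp (hXint 0) (hsm.2.1 0 n (Nat.zero_le n))
    _ = 1 := by simp [hX]
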